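/- Let a : B(0,δ) ⊂ ℂ → ℝ be a smooth (C^∞) function satisfying a(e^{iθ}z) = a(z) for all θ ∈ ℝ and all z. Then there exists a smooth function α : [0, δ²) → ℝ such that a(z) = α(|z|²) for all z ∈ B(0,δ). -/

import Mathlib

open Set MeasureTheory intervalIntegral Metric Filter

noncomputable def Jint (φ : ℝ → ℝ) (m : ℕ) (r : ℝ) : ℝ := ∫ s in (0:ℝ)..1, s ^ m * φ (s * r)

lemma hasDerivAt_Jint {φ : ℝ → ℝ} (hφ : ContDiff ℝ (⊤ : ℕ∞) φ) (m : ℕ) (x₀ : ℝ) :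
    HasDerivAt (Jint φ m) (Jint (deriv φ) (m + 1) x₀) x₀ := by
  have hφ' : Continuous (deriv φ) := (contDiff_infty_iff_deriv.mp hφ).2.continuous
  obtain ⟨C, hC⟩ := (isCompact_Icc (a := -(|x₀| + 1)) (b := |x₀| + 1)).exists_bound_of_continuousOn
    hφ'.continuousOn
  have key := intervalIntegral.hasDerivAt_integral_of_dominated_loc_of_deriv_le
    (𝕜 := ℝ) (μ := volume) (a := 0) (b := 1)
    (F := fun x s => s ^ m * φ (s * x)) (F' := fun x s => s ^ (m + 1) * deriv φ (s * x))
    (x₀ := x₀) (bound := fun _ => C) (s := ball x₀ 1) (ball_mem_nhds x₀ zero_lt_one)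
    (Eventually.of_forall fun x =>
      (((continuous_pow m).mul (hφ.continuous.comp (continuous_id.mul continuous_const))).aestronglyMeasurable).restrict)
    (((continuous_pow m).mul (hφ.continuous.comp (continuous_id.mul continuous_const))).intervalIntegrable 0 1)
    ((((continuous_pow (m+1)).mul (hφ'.comp (continuous_id.mul continuous_const))).aestronglyMeasurable).restrict)
    (Eventually.of_forall fun s hs x hx => ?_) (intervalIntegrable_const)
    (Eventually.of_forall fun s hs x hx => ?_)
  · exact key.2
  · -- bound
    rw [Set.uIoc_of_le zero_le_one] at hs
    have hs0 : 0 < s := hs.1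
    have hs1 : s ≤ 1 := hs.2
    have hx1 : |x| ≤ |x₀| + 1 := by
      have := abs_sub_abs_le_abs_sub x x₀
      have hb : |x - x₀| < 1 := by simpa [Real.dist_eq] using hx
      linarith
    have hsx : s * x ∈ Icc (-(|x₀| + 1)) (|x₀| + 1) := by
      rw [mem_Icc, ← abs_le]
      calc |s * x| = |s| * |x| := abs_mul _ _
        _ ≤ 1 * (|x₀| + 1) := by
            apply mul_le_mul (by rw [abs_of_pos hs0]; exact hs1) hx1 (abs_nonneg _)
            exact zero_le_one
        _ = |x₀| + 1 := one_mul _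
    calc ‖s ^ (m+1) * deriv φ (s * x)‖ = |s| ^ (m+1) * ‖deriv φ (s * x)‖ := by
          rw [norm_mul]; simp [abs_pow]
      _ ≤ 1 * C := by
          apply mul_le_mul (pow_le_one₀ (abs_nonneg _) (by rw [abs_of_pos hs0]; exact hs1))
            (hC _ hsx) (norm_nonneg _) zero_le_one
      _ = C := one_mul _
  · -- differentiability
    have hin : HasDerivAt (fun x : ℝ => s * x) s x := by
      simpa using (hasDerivAt_id x).const_mul s
    have hout : HasDerivAt φ (deriv φ (s * x)) (s * x) :=
      (hφ.differentiable (by simp) (s * x)).hasDerivAt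
    have := (hout.comp x hin).const_mul (s ^ m)
    exact this.congr_deriv (by ring)

lemma contDiff_Jint : ∀ (n : ℕ) (φ : ℝ → ℝ), ContDiff ℝ (⊤ : ℕ∞) φ → ∀ (m : ℕ),
    ContDiff ℝ (n : ℕ∞) (Jint φ m) := by
  intro n
  induction n with
  | zero =>
    intro φ hφ m
    have hdiff : Differentiable ℝ (Jint φ m) := fun x => (hasDerivAt_Jint hφ m x).differentiableAt
    exact_mod_cast contDiff_zero.mpr hdiff.continuous
  | succ n ih =>
    intro φ hφ m
    have h1 : Differentiable ℝ (Jint φ m) := fun x => (hasDerivAt_Jint hφ m x).differentiableAt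
    have h2 : deriv (Jint φ m) = Jint (deriv φ) (m + 1) :=
      funext fun x => (hasDerivAt_Jint hφ m x).deriv
    have hφ' : ContDiff ℝ (⊤ : ℕ∞) (deriv φ) := (contDiff_infty_iff_deriv.mp hφ).2
    have h3 := ih (deriv φ) hφ' (m + 1)
    have : ContDiff ℝ ((n : WithTop ℕ∞) + 1) (Jint φ m) := by
      rw [contDiff_succ_iff_deriv]
      refine ⟨h1, by simp, ?_⟩
      rw [h2]
      exact_mod_cast h3
    exact_mod_cast this

lemma contDiff_Jint_top {φ : ℝ → ℝ} (hφ : ContDiff ℝ (⊤ : ℕ∞) φ) (m : ℕ) :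
    ContDiff ℝ (⊤ : ℕ∞) (Jint φ m) :=
  contDiff_infty.mpr fun n => contDiff_Jint n φ hφ m

lemma hadamard {φ : ℝ → ℝ} (hφ : ContDiff ℝ (⊤ : ℕ∞) φ) (h0 : φ 0 = 0) (r : ℝ) :
    φ r = r * Jint (deriv φ) 0 r := by
  rcases eq_or_ne r 0 with rfl | hr
  · simp [h0]
  · unfold Jint
    simp only [pow_zero, one_mul]
    rw [intervalIntegral.integral_comp_mul_right (fun u => deriv φ u) hr]
    rw [zero_mul, one_mul]
    rw [intervalIntegral.integral_deriv_eq_sub' (f := φ) rfl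
      (fun x _ => hφ.differentiable (by simp) x)
      ((contDiff_infty_iff_deriv.mp hφ).2.continuous.continuousOn)]
    rw [h0, smul_eq_mul]
    field_simp
    simp

theorem whitney_aux : ∀ (n : ℕ) (g : ℝ → ℝ), ContDiff ℝ (⊤ : ℕ∞) g → (∀ r, g (-r) = g r) →
    ContDiffOn ℝ (n : ℕ∞) (fun t => g (Real.sqrt t)) (Ici 0) := by
  intro n
  induction n with
  | zero =>
    intro g hg hge
    exact_mod_cast contDiffOn_zero.mpr ((hg.continuous.comp Real.continuous_sqrt).continuousOn)
  | succ n ih =>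
    intro g hg hge
    -- derivative of g is odd
    have hg' : ContDiff ℝ (⊤ : ℕ∞) (deriv g) := (contDiff_infty_iff_deriv.mp hg).2
    have hg'' : ContDiff ℝ (⊤ : ℕ∞) (deriv (deriv g)) := (contDiff_infty_iff_deriv.mp hg').2
    have hodd : ∀ r, deriv g (-r) = -deriv g r := by
      intro r
      have h1 : deriv (fun x => g (-x)) r = -deriv g (-r) := deriv_comp_neg (f := g) r
      have h2 : (fun x => g (-x)) = g := funext hge
      rw [h2] at h1
      linarith [h1]
    have h0 : deriv g 0 = 0 := by have := hodd 0; simp at this; linarith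
    have heven'' : ∀ r, deriv (deriv g) (-r) = deriv (deriv g) r := by
      intro r
      have h1 : deriv (fun x => deriv g (-x)) r = -deriv (deriv g) (-r) :=
        deriv_comp_neg (f := deriv g) r
      have h2 : (fun x => deriv g (-x)) = fun x => -(deriv g x) := funext fun x => hodd x
      rw [h2, deriv.fun_neg] at h1
      linarith [h1]
    set k : ℝ → ℝ := Jint (deriv (deriv g)) 0 with hk_def
    have hk_smooth : ContDiff ℝ (⊤ : ℕ∞) k := contDiff_Jint_top hg'' 0
    have hkeven : ∀ r, k (-r) = k r := by
      intro r
      unfold k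
      unfold Jint
      congr 1
      funext s
      rw [show s * -r = -(s * r) by ring, heven'']
    have hk : ∀ r, deriv g r = r * k r := fun r => hadamard hg' h0 r
    -- main identity : g r = g 0 + r^2 * Jint k 1 r
    have hI : ∀ r, g r = g 0 + r ^ 2 * Jint k 1 r := by
      intro r
      have hφ : ContDiff ℝ (⊤ : ℕ∞) (fun x => g x - g 0) := hg.sub contDiff_const
      have hdφ : deriv (fun x => g x - g 0) = deriv g := by
        funext x; exact deriv_sub_const _
      have h := hadamard hφ (by simp) r
      rw [hdφ] at h
      have h2 : Jint (deriv g) 0 r = r * Jint k 1 r := by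
        unfold Jint
        rw [← intervalIntegral.integral_const_mul]
        congr 1
        funext s
        rw [pow_zero, one_mul, hk (s * r)]
        ring
      rw [h2] at h
      have : g r - g 0 = r ^ 2 * Jint k 1 r := by rw [h]; ring
      linarith
    -- derivative of g ∘ sqrt within Ici 0
    have hd : ∀ t ∈ Ici (0:ℝ), HasDerivWithinAt (fun t => g (Real.sqrt t))
        (k (Real.sqrt t) / 2) (Ici 0) t := by
      intro t ht
      rcases eq_or_lt_of_le (mem_Ici.mp ht) with rfl | htpos
      · -- at 0
        rw [hasDerivWithinAt_iff_tendsto_slope]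
        have hcont : Tendsto (fun t => Jint k 1 (Real.sqrt t)) (nhdsWithin 0 (Ici 0 \ {0}))
            (nhds (Jint k 1 (Real.sqrt 0))) :=
          (((contDiff_Jint_top hk_smooth 1).continuous.comp Real.continuous_sqrt).tendsto 0).mono_left
            nhdsWithin_le_nhds
        have hval : Jint k 1 (Real.sqrt 0) = k (Real.sqrt 0) / 2 := by
          unfold Jint
          simp [Real.sqrt_zero]
          ring
        rw [hval] at hcont
        refine hcont.congr' ?_
        filter_upwards [self_mem_nhdsWithin] with t ht'
        obtain ⟨ht0, htne⟩ := ht'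
        have htpos : 0 < t := lt_of_le_of_ne ht0 (Ne.symm (by simpa using htne))
        have htne' : t ≠ 0 := ne_of_gt htpos
        rw [slope_def_field, hI (Real.sqrt t), Real.sq_sqrt htpos.le, Real.sqrt_zero]
        field_simp
        ring
      · -- t > 0
        have hst : Real.sqrt t ≠ 0 := ne_of_gt (Real.sqrt_pos.mpr htpos)
        have hcomp : HasDerivAt (fun t => g (Real.sqrt t))
            (deriv g (Real.sqrt t) * (1 / (2 * Real.sqrt t))) t :=
          ((hg.differentiable (by simp) (Real.sqrt t)).hasDerivAt).comp t
            (Real.hasDerivAt_sqrt (ne_of_gt htpos))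
        have heq : deriv g (Real.sqrt t) * (1 / (2 * Real.sqrt t)) = k (Real.sqrt t) / 2 := by
          rw [hk (Real.sqrt t)]
          field_simp
        rw [heq] at hcomp
        exact hcomp.hasDerivWithinAt
    have hdiff : DifferentiableOn ℝ (fun t => g (Real.sqrt t)) (Ici 0) :=
      fun t ht => (hd t ht).differentiableWithinAt
    have hderivWithin : ∀ t ∈ Ici (0:ℝ), derivWithin (fun t => g (Real.sqrt t)) (Ici 0) t
        = k (Real.sqrt t) / 2 :=
      fun t ht => (hd t ht).derivWithin (uniqueDiffOn_Ici 0 t ht)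
    have hIH : ContDiffOn ℝ (n : ℕ∞) (fun t => k (Real.sqrt t) / 2) (Ici 0) :=
      (ih k hk_smooth hkeven).div_const 2
    have : ContDiffOn ℝ ((n : WithTop ℕ∞) + 1) (fun t => g (Real.sqrt t)) (Ici 0) := by
      rw [contDiffOn_succ_iff_derivWithin (uniqueDiffOn_Ici 0)]
      refine ⟨hdiff, by simp, ?_⟩
      apply ContDiffOn.congr (f := fun t => k (Real.sqrt t) / 2)
      · exact_mod_cast hIH
      · exact hderivWithin
    exact_mod_cast this

theorem whitney {g : ℝ → ℝ} (hg : ContDiff ℝ (⊤ : ℕ∞) g) (hge : ∀ r, g (-r) = g r) :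
    ContDiffOn ℝ (⊤ : ℕ∞) (fun t => g (Real.sqrt t)) (Ici 0) :=
  contDiffOn_infty.mpr fun n => whitney_aux n g hg hge

/-- A smooth gauge-invariant function on a disc is a smooth function of `|z|²`. -/
theorem stmt4 (δ : ℝ) (hδ : 0 < δ) (a : ℂ → ℝ)
    (hsmooth : ContDiffOn ℝ (⊤ : ℕ∞) a (Metric.ball 0 δ))
    (hgauge : ∀ θ : ℝ, ∀ z ∈ Metric.ball (0 : ℂ) δ,
      a (Complex.exp (θ * Complex.I) * z) = a z) :
    ∃ α : ℝ → ℝ, ContDiffOn ℝ (⊤ : ℕ∞) α (Set.Ico 0 (δ ^ 2)) ∧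
      ∀ z ∈ Metric.ball (0 : ℂ) δ, a z = α (‖z‖ ^ 2) := by
  -- a is even on the real axis
  have haR_even : ∀ r : ℝ, |r| < δ → a (↑(-r) : ℂ) = a (↑r : ℂ) := by
    intro r hr
    have hmem : (↑r : ℂ) ∈ Metric.ball (0 : ℂ) δ := by
      rw [mem_ball_zero_iff, Complex.norm_real]; exact hr
    have := hgauge Real.pi (↑r) hmem
    rw [Complex.exp_pi_mul_I] at this
    rw [show ((-r : ℝ) : ℂ) = -1 * (r : ℂ) by push_cast; ring]
    exact this
  -- a z = a |z|
  have habs : ∀ z ∈ Metric.ball (0 : ℂ) δ, a z = a (↑(‖z‖) : ℂ) := by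
    intro z hz
    have hmem : (↑(‖z‖) : ℂ) ∈ Metric.ball (0 : ℂ) δ := by
      rw [mem_ball_zero_iff, Complex.norm_real, Real.norm_eq_abs,
        abs_of_nonneg (norm_nonneg z)]
      rwa [mem_ball_zero_iff] at hz
    have := hgauge z.arg (↑(‖z‖)) hmem
    rw [show Complex.exp (↑z.arg * Complex.I) * ↑(‖z‖)
        = ↑(‖z‖) * Complex.exp (↑z.arg * Complex.I) by ring,
      Complex.norm_mul_exp_arg_mul_I] at this
    exact this
  refine ⟨fun t => a (↑(Real.sqrt t) : ℂ), ?_, ?_⟩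
  · -- smoothness
    intro x hx
    obtain ⟨hx0, hxδ⟩ := hx
    set r0 := Real.sqrt x with hr0
    have hr0_nonneg : 0 ≤ r0 := Real.sqrt_nonneg x
    have hr0δ : r0 < δ := by
      rw [hr0, show δ = Real.sqrt (δ ^ 2) by rw [Real.sqrt_sq hδ.le]]
      exact Real.sqrt_lt_sqrt hx0 hxδ
    set rIn := (2 * r0 + δ) / 3 with hrIn_def
    set rOut := (r0 + 2 * δ) / 3 with hrOut_def
    have h1 : r0 < rIn := by rw [hrIn_def]; linarith
    have h2 : rIn < rOut := by rw [hrIn_def, hrOut_def]; linarith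
    have h3 : rOut < δ := by rw [hrOut_def]; linarith
    have hrIn_pos : 0 < rIn := lt_of_le_of_lt hr0_nonneg h1
    have hrOut_pos : 0 < rOut := lt_trans hrIn_pos h2
    have hsq_pos : 0 < rOut ^ 2 - rIn ^ 2 := by
      have := pow_lt_pow_left₀ h2 hrIn_pos.le two_ne_zero
      linarith
    set χ : ℝ → ℝ := fun r => Real.smoothTransition ((rOut ^ 2 - r ^ 2) / (rOut ^ 2 - rIn ^ 2))
      with hχ_def
    have hχ_smooth : ContDiff ℝ (⊤ : ℕ∞) χ := by
      apply Real.smoothTransition.contDiff.comp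
      exact (contDiff_const.sub (contDiff_id.pow 2)).div_const _
    have hχ_one : ∀ r : ℝ, |r| ≤ rIn → χ r = 1 := by
      intro r hr
      apply Real.smoothTransition.one_of_one_le
      rw [le_div_iff₀ hsq_pos, one_mul]
      have : r ^ 2 ≤ rIn ^ 2 := by
        rw [← sq_abs r]
        exact pow_le_pow_left₀ (abs_nonneg r) hr 2
      linarith
    have hχ_zero : ∀ r : ℝ, rOut ≤ |r| → χ r = 0 := by
      intro r hr
      apply Real.smoothTransition.zero_of_nonpos
      apply div_nonpos_of_nonpos_of_nonneg _ hsq_pos.le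
      have : rOut ^ 2 ≤ r ^ 2 := by
        rw [← sq_abs r]
        exact pow_le_pow_left₀ hrOut_pos.le hr 2
      linarith
    set g : ℝ → ℝ := fun r => if |r| < δ then χ r * a (↑r : ℂ) else 0 with hg_def
    have haR : ContDiffOn ℝ (⊤ : ℕ∞) (fun r : ℝ => a (↑r : ℂ)) (Ioo (-δ) δ) := by
      apply hsmooth.comp (Complex.ofRealCLM.contDiff.contDiffOn)
      intro r hr
      rw [mem_ball_zero_iff]
      simp only [Complex.ofRealCLM_apply, Complex.norm_real, Real.norm_eq_abs]
      rw [abs_lt]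
      exact ⟨hr.1, hr.2⟩
    have hg_smooth : ContDiff ℝ (⊤ : ℕ∞) g := by
      rw [contDiff_iff_contDiffAt]
      intro r
      by_cases hr : |r| < δ
      · have hmem : r ∈ Ioo (-δ) δ := by rw [mem_Ioo, ← abs_lt]; exact hr
        have hnhds : Ioo (-δ) δ ∈ nhds r := Ioo_mem_nhds hmem.1 hmem.2
        have haRat : ContDiffAt ℝ (⊤ : ℕ∞) (fun r : ℝ => a (↑r : ℂ)) r :=
          haR.contDiffAt hnhds
        apply (hχ_smooth.contDiffAt.mul haRat).congr_of_eventuallyEq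
        filter_upwards [hnhds] with r' hr'
        rw [hg_def]
        simp only
        rw [if_pos (by rw [abs_lt]; exact ⟨hr'.1, hr'.2⟩)]
      · have hr' : rOut < |r| := lt_of_lt_of_le h3 (not_lt.mp hr)
        have hnhds : {r : ℝ | rOut < |r|} ∈ nhds r :=
          (isOpen_lt continuous_const continuous_abs).mem_nhds hr'
        apply (contDiffAt_const (c := (0:ℝ))).congr_of_eventuallyEq
        filter_upwards [hnhds] with r' hr'
        rw [hg_def]
        simp only
        by_cases h : |r'| < δ
        · rw [if_pos h, hχ_zero r' (le_of_lt hr'), zero_mul]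
        · rw [if_neg h]
    have hg_even : ∀ r, g (-r) = g r := by
      intro r
      rw [hg_def]
      simp only [abs_neg]
      by_cases h : |r| < δ
      · rw [if_pos h, if_pos h]
        have hχe : χ (-r) = χ r := by rw [hχ_def]; simp [neg_sq]
        rw [hχe, haR_even r h]
      · rw [if_neg h, if_neg h]
    have hg_eq : ∀ r : ℝ, |r| ≤ rIn → g r = a (↑r : ℂ) := by
      intro r hr
      rw [hg_def]
      simp only
      rw [if_pos (lt_of_le_of_lt hr (lt_trans h2 h3)), hχ_one r hr, one_mul]
    have hW := whitney hg_smooth hg_even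
    have h1' : ContDiffWithinAt ℝ (⊤ : ℕ∞) (fun t => g (Real.sqrt t)) (Ico 0 (δ ^ 2)) x :=
      (hW x hx0).mono Ico_subset_Ici_self
    apply h1'.congr_of_eventuallyEq
    · have hxlt : x < rIn ^ 2 := by
        have : x = r0 ^ 2 := (Real.sq_sqrt hx0).symm
        rw [this]
        exact pow_lt_pow_left₀ h1 hr0_nonneg two_ne_zero
      filter_upwards [mem_nhdsWithin_of_mem_nhds (Iio_mem_nhds hxlt)] with t ht
      have hst : Real.sqrt t < rIn := (Real.sqrt_lt' hrIn_pos).mpr ht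
      exact (hg_eq (Real.sqrt t) (by rw [abs_of_nonneg (Real.sqrt_nonneg t)]; exact hst.le)).symm
    · have hst : Real.sqrt x < rIn := h1
      exact (hg_eq (Real.sqrt x) (by rw [abs_of_nonneg (Real.sqrt_nonneg x)]; exact hst.le)).symm
  · -- the identity
    intro z hz
    show a z = a ↑(Real.sqrt (‖z‖ ^ 2))
    rw [Real.sqrt_sq (norm_nonneg z)]
    exact habs z hz
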